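/- arXiv:1112.1455 — 2 statements merged into one kernel-verified Lean document; each statement's English description precedes it below -/
import Mathlib

section
/- Let A be a C*-algebra, B a hereditary C*-subalgebra of A, and x a positive element of B. Then x is finite in the sense of Cuntz and Pedersen as an element of B if and only if x is finite in the sense of Cuntz and Pedersen as an element of A. In symbols, 𝓕^B = 𝓕^A ∩ B, where 𝓕^A denotes the set of finite positive elements of A. -/
open Filter Topology

/-- A *hereditary C*-subalgebra* of a C*-algebra `A`: a norm-closed star-subalgebra `B ⊆ A`
such that whenever `a ∈ A` and `b ∈ B` satisfy `0 ≤ a ≤ b`, then `a ∈ B`. -/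
def IsHereditarySubalgebra {A : Type*} [NonUnitalCStarAlgebra A] [PartialOrder A]
    [StarOrderedRing A] (B : NonUnitalStarSubalgebra ℂ A) : Prop :=
  IsClosed (B : Set A) ∧ ∀ ⦃a b : A⦄, b ∈ B → 0 ≤ a → a ≤ b → a ∈ B

/-- An element `x` is *finite in the sense of Cuntz and Pedersen* relative to the subset `S`
(`S = Set.univ` gives finiteness in `A`; `S = B` gives finiteness in the C*-algebra `B`):
for every sequence `(z k)` in `S` such that `∑ star (z k) * z k` converges in norm to `x` and
`∑ z k * star (z k)` converges in norm to `y` with `y ≤ x`, one has `y = x`. -/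
def CPFiniteIn {A : Type*} [NonUnitalRing A] [StarRing A] [TopologicalSpace A]
    [PartialOrder A] (S : Set A) (x : A) : Prop :=
  ∀ z : ℕ → A, (∀ k, z k ∈ S) → ∀ y : A,
    Tendsto (fun n => ∑ k ∈ Finset.range n, star (z k) * z k) atTop (nhds x) →
    Tendsto (fun n => ∑ k ∈ Finset.range n, z k * star (z k)) atTop (nhds y) →
    y ≤ x → y = x

section Helpers

open scoped ContinuousMapZero in
lemma CPH.cfcnHom_mem {A : Type*} [NonUnitalCStarAlgebra A] [PartialOrder A] [StarOrderedRing A]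
    {B : NonUnitalStarSubalgebra ℂ A} (hBc : IsClosed (B : Set A)) {a : A}
    (ha : IsSelfAdjoint a) (haB : a ∈ B) (f : C(quasispectrum ℝ a, ℝ)₀) :
    cfcₙHom ha f ∈ B := by
  have hu : NonUnitalContinuousFunctionalCalculus ℝ A IsSelfAdjoint := inferInstance
  have : CompactSpace (quasispectrum ℝ a) := hu.compactSpace_quasispectrum a
  have h0 : ((0 : quasispectrum ℝ a) : ℝ) = 0 := rfl
  induction f using ContinuousMapZero.induction_on_of_compact with
  | zero => rw [map_zero]; exact zero_mem B
  | id =>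
      have : cfcₙHom ha (ContinuousMapZero.id (quasispectrum ℝ a)) = a := cfcₙHom_id ha
      rwa [this]
  | star_id =>
      have : cfcₙHom ha (ContinuousMapZero.id (quasispectrum ℝ a)) = a := cfcₙHom_id ha
      rw [map_star, this]; exact star_mem haB
  | add f g hf hg => rw [map_add]; exact add_mem hf hg
  | mul f g hf hg => rw [map_mul]; exact mul_mem hf hg
  | smul r f hf =>
      rw [map_smul, ← algebraMap_smul ℂ r (cfcₙHom ha f)]
      exact SMulMemClass.smul_mem _ hf
  | frequently f hf =>
      have hcl : IsClosed {g : C(quasispectrum ℝ a, ℝ)₀ | cfcₙHom ha g ∈ B} :=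
        hBc.preimage (cfcₙHom_continuous ha)
      exact hcl.closure_subset (mem_closure_iff_frequently.2 hf)

lemma CPH.cfcn_mem {A : Type*} [NonUnitalCStarAlgebra A] [PartialOrder A] [StarOrderedRing A]
    {B : NonUnitalStarSubalgebra ℂ A} (hBc : IsClosed (B : Set A)) {a : A}
    (haB : a ∈ B) (f : ℝ → ℝ) : cfcₙ f a ∈ B :=
  cfcₙ_cases (· ∈ B) a f (zero_mem B) fun _ _ ha => CPH.cfcnHom_mem hBc ha haB _

section P2

variable {A : Type*} [NonUnitalCStarAlgebra A] [PartialOrder A] [StarOrderedRing A]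
  {B : NonUnitalStarSubalgebra ℂ A}

lemma CPH.conj_mem (hB : IsHereditarySubalgebra B) {b : A} (hb : b ∈ B) (c : A) :
    star b * c * b ∈ B := by
  have key : ∀ d : A, 0 ≤ d → star b * d * b ∈ B := by
    intro d hd
    have hmem : ‖d‖ • (star b * b) ∈ B := by
      rw [← algebraMap_smul ℂ ‖d‖]
      exact SMulMemClass.smul_mem _ (mul_mem (star_mem hb) hb)
    exact hB.2 hmem (star_left_conjugate_nonneg hd b)
      (CStarAlgebra.star_left_conjugate_le_norm_smul (IsSelfAdjoint.of_nonneg hd))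
  have sa : ∀ d : A, IsSelfAdjoint d → star b * d * b ∈ B := by
    intro d hd
    rw [← CFC.posPart_sub_negPart d hd, mul_sub, sub_mul]
    exact sub_mem (key _ (CFC.posPart_nonneg d)) (key _ (CFC.negPart_nonneg d))
  rw [← realPart_add_I_smul_imaginaryPart c, mul_add, add_mul, mul_smul_comm, smul_mul_assoc]
  exact add_mem (sa _ (realPart c).property) (SMulMemClass.smul_mem _ (sa _ (imaginaryPart c).property))

lemma CPH.mul_mem_of_mem (hB : IsHereditarySubalgebra B) {b b' : A} (hb : b ∈ B)
    (hb' : b' ∈ B) (c : A) : b * c * b' ∈ B := by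
  set u := star b with hu
  have hbu : b = star u := by simp [hu]
  set v := b' with hv
  have key : b * c * b' =
      (4⁻¹ : ℂ) • ((star (v + u) * c * (v + u)
        + Complex.I • (star (v + Complex.I • u) * c * (v + Complex.I • u)))
        - star (v - u) * c * (v - u)
        - Complex.I • (star (v - Complex.I • u) * c * (v - Complex.I • u))) := by
    rw [hbu]
    simp only [star_add, star_sub, star_smul, Complex.star_def, Complex.conj_I, mul_add, add_mul,
      mul_sub, sub_mul, smul_mul_assoc, mul_smul_comm, smul_add, smul_sub, smul_smul, neg_smul,
      neg_mul, mul_neg, neg_neg, Complex.I_mul_I]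
    match_scalars <;> first | ring1 | (ring_nf; simp [Complex.I_sq]; try norm_num)
  rw [key]
  have hu' : u ∈ B := star_mem hb
  have h1 : v + u ∈ B := add_mem hb' hu'
  have h2 : v + Complex.I • u ∈ B := add_mem hb' (SMulMemClass.smul_mem _ hu')
  have h3 : v - u ∈ B := sub_mem hb' hu'
  have h4 : v - Complex.I • u ∈ B := sub_mem hb' (SMulMemClass.smul_mem _ hu')
  exact SMulMemClass.smul_mem _ <| sub_mem (sub_mem (add_mem (CPH.conj_mem hB h1 c)
    (SMulMemClass.smul_mem _ (CPH.conj_mem hB h2 c))) (CPH.conj_mem hB h3 c))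
    (SMulMemClass.smul_mem _ (CPH.conj_mem hB h4 c))

end P2

section P4

variable {A : Type*} [NonUnitalCStarAlgebra A] [PartialOrder A] [StarOrderedRing A]
  {B : NonUnitalStarSubalgebra ℂ A}

lemma CPH.norm_est (n : ℕ) (hn : 0 < n) (z : A) :
    ‖z - cfcₙ (fun t : ℝ => min ((n : ℝ) * t) 1) (z * star z) * z‖ ^ 2 ≤ (n : ℝ)⁻¹ := by
  set f : ℝ → ℝ := fun t => min ((n : ℝ) * t) 1 with hfdef
  have hfc : Continuous f := by fun_prop
  have hf0 : f 0 = 0 := by simp [hfdef]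
  have ha : (0 : A) ≤ z * star z := mul_star_self_nonneg z
  have hsa : IsSelfAdjoint (z * star z) := .of_nonneg ha
  set c := cfcₙ f (z * star z) with hc
  have hcsa : IsSelfAdjoint c := cfcₙ_predicate f (z * star z)
  have expand : (z - c * z) * star (z - c * z) =
      z * star z - c * (z * star z) -
        ((z * star z) * c - c * ((z * star z) * c)) := by
    rw [star_sub, star_mul, hcsa.star_eq]
    noncomm_ring
  have hg1 : Continuous (fun t : ℝ => f t * t) := hfc.mul continuous_id
  have hg2 : Continuous (fun t : ℝ => t * f t) := continuous_id.mul hfc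
  have hg3 : Continuous (fun t : ℝ => f t * (t * f t)) := hfc.mul hg2
  have hid : Continuous (fun t : ℝ => t) := continuous_id
  have key : (z - c * z) * star (z - c * z) =
      cfcₙ (fun t : ℝ => t * (1 - f t) ^ 2) (z * star z) := by
    rw [expand]
    have e1 : cfcₙ (fun t : ℝ => t - f t * t) (z * star z)
        = z * star z - c * (z * star z) := by
      rw [cfcₙ_sub (fun t : ℝ => t) (fun t : ℝ => f t * t) (z * star z)
            hid.continuousOn (by simp) hg1.continuousOn (by simp [hf0]),
        cfcₙ_mul f (fun t : ℝ => t) (z * star z) hfc.continuousOn hf0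
          hid.continuousOn (by simp),
        cfcₙ_id' ℝ (z * star z)]
    have e2 : cfcₙ (fun t : ℝ => t * f t - f t * (t * f t)) (z * star z)
        = (z * star z) * c - c * ((z * star z) * c) := by
      rw [cfcₙ_sub (fun t : ℝ => t * f t) (fun t : ℝ => f t * (t * f t)) (z * star z)
            hg2.continuousOn (by simp [hf0]) hg3.continuousOn (by simp [hf0]),
        cfcₙ_mul f (fun t : ℝ => t * f t) (z * star z) hfc.continuousOn hf0
          hg2.continuousOn (by simp [hf0]),
        cfcₙ_mul (fun t : ℝ => t) f (z * star z) hid.continuousOn (by simp)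
          hfc.continuousOn hf0,
        cfcₙ_id' ℝ (z * star z)]
    rw [← e1, ← e2, ← cfcₙ_sub (fun t : ℝ => t - f t * t)
      (fun t : ℝ => t * f t - f t * (t * f t)) (z * star z)
      (hid.sub hg1).continuousOn (by simp [hf0]) (hg2.sub hg3).continuousOn (by simp [hf0])]
    exact cfcₙ_congr fun t _ => by ring
  have hbound : ∀ t ∈ quasispectrum ℝ (z * star z), ‖t * (1 - f t) ^ 2‖ ≤ (n : ℝ)⁻¹ := by
    intro t ht
    have ht' : 0 ≤ t := quasispectrum_nonneg_of_nonneg _ ha t ht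
    have hn' : (0 : ℝ) < n := by exact_mod_cast hn
    rw [Real.norm_eq_abs, abs_of_nonneg (mul_nonneg ht' (sq_nonneg _))]
    rcases le_or_gt ((n : ℝ) * t) 1 with h | h
    · have hf1 : 0 ≤ f t := le_min (by positivity) one_pos.le
      have hf2 : f t ≤ 1 := min_le_right _ _
      have hsq : (1 - f t) ^ 2 ≤ 1 := by
        rw [sq_le_one_iff_abs_le_one]
        rw [abs_le]; constructor <;> linarith
      calc t * (1 - f t) ^ 2 ≤ t * 1 := by
            exact mul_le_mul_of_nonneg_left hsq ht'
        _ = t := mul_one t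
        _ ≤ (n : ℝ)⁻¹ := by
            rw [← one_div, le_div_iff₀ hn', mul_comm]; exact h
    · have hft : f t = 1 := min_eq_right h.le
      have h0 : t * (1 - f t) ^ 2 = 0 := by rw [hft]; ring
      rw [h0]
      positivity
  have hnorm : ‖(z - c * z) * star (z - c * z)‖ ≤ (n : ℝ)⁻¹ := by
    rw [key]; exact norm_cfcₙ_le hbound
  calc ‖z - c * z‖ ^ 2 = ‖(z - c * z) * star (z - c * z)‖ := by
        rw [CStarRing.norm_self_mul_star, sq]
    _ ≤ (n : ℝ)⁻¹ := hnorm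

end P4

section P5

variable {A : Type*} [NonUnitalCStarAlgebra A] [PartialOrder A] [StarOrderedRing A]
  {B : NonUnitalStarSubalgebra ℂ A}

lemma CPH.norm_cfcn_le_one (n : ℕ) {a : A} (ha : 0 ≤ a) :
    ‖cfcₙ (fun t : ℝ => min ((n : ℝ) * t) 1) a‖ ≤ 1 := by
  refine norm_cfcₙ_le fun t ht => ?_
  have ht' : 0 ≤ t := quasispectrum_nonneg_of_nonneg _ ha t ht
  rw [Real.norm_eq_abs, abs_le]
  constructor
  · have : (0:ℝ) ≤ min ((n : ℝ) * t) 1 := le_min (by positivity) one_pos.le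
    linarith
  · exact min_le_right _ _

lemma CPH.norm_est' (n : ℕ) (hn : 0 < n) (z : A) :
    ‖z - z * cfcₙ (fun t : ℝ => min ((n : ℝ) * t) 1) (star z * z)‖ ^ 2 ≤ (n : ℝ)⁻¹ := by
  have h := CPH.norm_est n hn (star z)
  rw [star_star] at h
  set d := cfcₙ (fun t : ℝ => min ((n : ℝ) * t) 1) (star z * z) with hd
  have hdsa : IsSelfAdjoint d := cfcₙ_predicate _ (star z * z)
  have : z - z * d = star (star z - d * star z) := by
    rw [star_sub, star_mul, star_star, hdsa.star_eq]
  rw [this, norm_star]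
  exact h

lemma CPH.mem_of_star_mul_self (hB : IsHereditarySubalgebra B) {z : A}
    (h1 : star z * z ∈ B) (h2 : z * star z ∈ B) : z ∈ B := by
  set w : ℕ → A := fun n => cfcₙ (fun t : ℝ => min ((n : ℝ) * t) 1) (z * star z) * z *
    cfcₙ (fun t : ℝ => min ((n : ℝ) * t) 1) (star z * z) with hw
  have hmem : ∀ n, w n ∈ B := fun n =>
    CPH.mul_mem_of_mem hB (CPH.cfcn_mem hB.1 h2 _) (CPH.cfcn_mem hB.1 h1 _) z
  have hbound : ∀ n : ℕ, 0 < n → ‖w n - z‖ ≤ 2 * Real.sqrt (n : ℝ)⁻¹ := by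
    intro n hn
    set c := cfcₙ (fun t : ℝ => min ((n : ℝ) * t) 1) (z * star z) with hc
    set d := cfcₙ (fun t : ℝ => min ((n : ℝ) * t) 1) (star z * z) with hd
    have hsplit : z - w n = (z - c * z) + c * (z - z * d) := by
      rw [hw]; noncomm_ring
    have sqrt_nonneg : (0:ℝ) ≤ Real.sqrt (n : ℝ)⁻¹ := Real.sqrt_nonneg _
    have e1 : ‖z - c * z‖ ≤ Real.sqrt (n : ℝ)⁻¹ := by
      rw [← Real.sqrt_sq (norm_nonneg (z - c * z))]
      exact Real.sqrt_le_sqrt (CPH.norm_est n hn z)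
    have e2 : ‖z - z * d‖ ≤ Real.sqrt (n : ℝ)⁻¹ := by
      rw [← Real.sqrt_sq (norm_nonneg (z - z * d))]
      exact Real.sqrt_le_sqrt (CPH.norm_est' n hn z)
    have e3 : ‖c‖ ≤ 1 := CPH.norm_cfcn_le_one n (mul_star_self_nonneg z)
    calc ‖w n - z‖ = ‖z - w n‖ := norm_sub_rev _ _
      _ = ‖(z - c * z) + c * (z - z * d)‖ := by rw [hsplit]
      _ ≤ ‖z - c * z‖ + ‖c * (z - z * d)‖ := norm_add_le _ _
      _ ≤ ‖z - c * z‖ + ‖c‖ * ‖z - z * d‖ := by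
          gcongr; exact norm_mul_le _ _
      _ ≤ Real.sqrt (n : ℝ)⁻¹ + 1 * Real.sqrt (n : ℝ)⁻¹ := by
          gcongr
      _ = 2 * Real.sqrt (n : ℝ)⁻¹ := by ring
  have hg : Tendsto (fun n : ℕ => 2 * Real.sqrt (n : ℝ)⁻¹) atTop (𝓝 0) := by
    have h1 : Tendsto (fun n : ℕ => (n : ℝ)⁻¹) atTop (𝓝 0) :=
      tendsto_inv_atTop_nhds_zero_nat
    have h2 : Tendsto (fun n : ℕ => Real.sqrt ((n : ℝ)⁻¹)) atTop (𝓝 0) := by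
      have h3 := (Real.continuous_sqrt.tendsto' 0 0 (by simp)).comp h1
      simpa [Function.comp_def] using h3
    simpa using h2.const_mul 2
  have hten0 : Tendsto (fun n => w n - z) atTop (𝓝 0) := by
    refine squeeze_zero_norm' ?_ hg
    filter_upwards [Filter.eventually_gt_atTop 0] with n hn
    exact hbound n hn
  have hten : Tendsto w atTop (𝓝 z) := by
    simpa using tendsto_sub_nhds_zero_iff.mp hten0
  exact hB.1.mem_of_tendsto hten (Filter.Eventually.of_forall hmem)

end P5



/-- For a hereditary C*-subalgebra `B` of a C*-algebra `A` and a positive element `x ∈ B`,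
`x` is finite (in the sense of Cuntz and Pedersen) in `B` if and only if it is finite in `A`;
in symbols, `𝓕^B = 𝓕^A ∩ B`. -/
theorem cpFinite_hereditary_iff
    {A : Type*} [NonUnitalCStarAlgebra A] [PartialOrder A] [StarOrderedRing A]
    (B : NonUnitalStarSubalgebra ℂ A) (hB : IsHereditarySubalgebra B)
    (x : A) (hx : x ∈ B) (hx' : 0 ≤ x) :
    CPFiniteIn (B : Set A) x ↔ CPFiniteIn (Set.univ : Set A) x := by

  constructor
  · intro h z _ y hzx hzy hyx
    have hmono1 : Monotone (fun n => ∑ k ∈ Finset.range n, star (z k) * z k) := by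
      apply monotone_nat_of_le_succ
      intro n
      rw [Finset.sum_range_succ]
      exact le_add_of_nonneg_right (star_mul_self_nonneg _)
    have hmono2 : Monotone (fun n => ∑ k ∈ Finset.range n, z k * star (z k)) := by
      apply monotone_nat_of_le_succ
      intro n
      rw [Finset.sum_range_succ]
      exact le_add_of_nonneg_right (mul_star_self_nonneg _)
    have hterm1 : ∀ k, star (z k) * z k ≤ x := by
      intro k
      calc star (z k) * z k ≤ ∑ j ∈ Finset.range (k + 1), star (z j) * z j :=
            Finset.single_le_sum (f := fun j => star (z j) * z j)
              (fun j _ => star_mul_self_nonneg _) (Finset.self_mem_range_succ k)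
        _ ≤ x := hmono1.ge_of_tendsto hzx (k + 1)
    have hterm2 : ∀ k, z k * star (z k) ≤ y := by
      intro k
      calc z k * star (z k) ≤ ∑ j ∈ Finset.range (k + 1), z j * star (z j) :=
            Finset.single_le_sum (f := fun j => z j * star (z j))
              (fun j _ => mul_star_self_nonneg _) (Finset.self_mem_range_succ k)
        _ ≤ y := hmono2.ge_of_tendsto hzy (k + 1)
    have hzkB : ∀ k, z k ∈ B := by
      intro k
      refine CPH.mem_of_star_mul_self hB ?_ ?_
      · exact hB.2 hx (star_mul_self_nonneg _) (hterm1 k)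
      · exact hB.2 hx (mul_star_self_nonneg _) ((hterm2 k).trans hyx)
    exact h z hzkB y hzx hzy hyx
  · intro h z _ y h1 h2 h3
    exact h z (fun k => Set.mem_univ _) y h1 h2 h3
end Helpers
end

section
/- For a C*-algebra A, the following are equivalent: (1) A is semi-finite, i.e. every nonzero positive element of A dominates a nonzero finite positive element; (2) every nonzero hereditary C*-subalgebra of A contains a nonzero finite hereditary C*-subalgebra, i.e. a nonzero hereditary C*-subalgebra C of A all of whose positive elements are finite in A. -/
open Filter Topology

/-- An element `x` of a C*-algebra `A` is *finite in the sense of Cuntz and Pedersen*: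
for every sequence `(z k)` in `A` such that `∑ star (z k) * z k` converges in norm to `x` and
`∑ z k * star (z k)` converges in norm to `y` with `y ≤ x`, one has `y = x`. -/
def CPFinite {A : Type*} [NonUnitalRing A] [StarRing A] [TopologicalSpace A]
    [PartialOrder A] (x : A) : Prop :=
  ∀ z : ℕ → A, ∀ y : A,
    Tendsto (fun n => ∑ k ∈ Finset.range n, star (z k) * z k) atTop (nhds x) →
    Tendsto (fun n => ∑ k ∈ Finset.range n, z k * star (z k)) atTop (nhds y) →
    y ≤ x → y = x

section Aux

set_option linter.unusedSectionVars false
set_option linter.unusedVariables false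

private def prepend {A : Type*} (r : A) (z : ℕ → A) : ℕ → A
  | 0 => r
  | (n+1) => z n

@[simp] private lemma prepend_zero {A : Type*} (r : A) (z : ℕ → A) : prepend r z 0 = r := rfl
@[simp] private lemma prepend_succ {A : Type*} (r : A) (z : ℕ → A) (n : ℕ) :
    prepend r z (n + 1) = z n := rfl

variable {A : Type*} [NonUnitalCStarAlgebra A] [PartialOrder A] [StarOrderedRing A]

private lemma rsmul_nonneg {r : ℝ} (hr : 0 ≤ r) {a : A} (ha : 0 ≤ a) : 0 ≤ r • a := by
  rw [← cfcₙ_const_mul_id r a (IsSelfAdjoint.of_nonneg ha)]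
  exact cfcₙ_nonneg fun x hx => mul_nonneg hr (quasispectrum_nonneg_of_nonneg a ha x hx)

private lemma rsmul_mono {r : ℝ} (hr : 0 ≤ r) {a b : A} (hab : a ≤ b) : r • a ≤ r • b := by
  have := rsmul_nonneg hr (sub_nonneg.2 hab)
  rwa [smul_sub, sub_nonneg] at this

private lemma CPFinite.rsmul {x : A} (hx : CPFinite x) {μ : ℝ} (hμ : 0 < μ) :
    CPFinite (μ • x) := by
  intro z y h1 h2 hle
  set ν : ℝ := Real.sqrt μ⁻¹ with hν
  have hν2 : ν * ν = μ⁻¹ := Real.mul_self_sqrt (by positivity)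
  have key : ∀ a b : A, (ν • a) * (ν • b) = μ⁻¹ • (a * b) := fun a b => by
    rw [smul_mul_assoc, mul_smul_comm, smul_smul, hν2]
  have hstar : ∀ k : ℕ, star (ν • z k) * (ν • z k) = μ⁻¹ • (star (z k) * z k) := fun k => by
    rw [star_smul, star_trivial, key]
  have hstar' : ∀ k : ℕ, (ν • z k) * star (ν • z k) = μ⁻¹ • (z k * star (z k)) := fun k => by
    rw [star_smul, star_trivial, key]
  have e1 : Tendsto (fun n => ∑ k ∈ Finset.range n, star ((ν • z ·) k) * (ν • z ·) k)
      atTop (nhds x) := by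
    simp only [hstar, ← Finset.smul_sum]
    have := h1.const_smul (μ⁻¹ : ℝ)
    rwa [smul_smul, inv_mul_cancel₀ hμ.ne', one_smul] at this
  have e2 : Tendsto (fun n => ∑ k ∈ Finset.range n, ((ν • z ·) k) * star ((ν • z ·) k))
      atTop (nhds (μ⁻¹ • y)) := by
    simp only [hstar', ← Finset.smul_sum]
    exact h2.const_smul _
  have hle' : μ⁻¹ • y ≤ x := by
    have := rsmul_mono (r := μ⁻¹) (a := y) (b := μ • x) (by positivity) hle
    rwa [smul_smul, inv_mul_cancel₀ hμ.ne', one_smul] at this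
  have := hx (ν • z ·) (μ⁻¹ • y) e1 e2 hle'
  have := congrArg (fun w : A => μ • w) this
  simpa [smul_smul, mul_inv_cancel₀ hμ.ne'] using this

private lemma CPFinite.of_le {x c : A} (hx : CPFinite x) (hc : 0 ≤ c) (hcx : c ≤ x) :
    CPFinite c := by
  intro z y h1 h2 hle
  have hxc : 0 ≤ x - c := sub_nonneg.2 hcx
  set r := CFC.sqrt (x - c) with hrdef
  have hr : r * r = x - c := CFC.sqrt_mul_sqrt_self _ hxc
  have hrs : star r = r := (IsSelfAdjoint.of_nonneg (CFC.sqrt_nonneg _)).star_eq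
  set w : ℕ → A := prepend r z with hwdef
  have sum1 : ∀ n, ∑ k ∈ Finset.range (n + 1), star (w k) * w k
      = (∑ k ∈ Finset.range n, star (z k) * z k) + (x - c) := by
    intro n
    rw [Finset.sum_range_succ']
    simp only [hwdef, prepend_zero, prepend_succ]
    rw [hrs, hr]
  have sum2 : ∀ n, ∑ k ∈ Finset.range (n + 1), w k * star (w k)
      = (∑ k ∈ Finset.range n, z k * star (z k)) + (x - c) := by
    intro n
    rw [Finset.sum_range_succ']
    simp only [hwdef, prepend_zero, prepend_succ]
    rw [hrs, hr]
  have hcx' : c + (x - c) = x := by abel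
  have t1 : Tendsto (fun n => ∑ k ∈ Finset.range n, star (w k) * w k) atTop (nhds x) := by
    rw [← tendsto_add_atTop_iff_nat 1]
    simp only [sum1]
    have := h1.add_const (x - c)
    rwa [hcx'] at this
  have t2 : Tendsto (fun n => ∑ k ∈ Finset.range n, w k * star (w k)) atTop
      (nhds (y + (x - c))) := by
    rw [← tendsto_add_atTop_iff_nat 1]
    simp only [sum2]
    exact h2.add_const (x - c)
  have hle2 : y + (x - c) ≤ x := by
    calc y + (x - c) ≤ c + (x - c) := add_le_add_left hle _
    _ = x := by abel
  have h3 : y + (x - c) = c + (x - c) := (hx w (y + (x - c)) t1 t2 hle2).trans (by abel)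
  exact add_right_cancel h3

/-- The corner subalgebra `{z | e z = z = z e}`. -/
private def cornerAlg (e : A) (he : IsSelfAdjoint e) : NonUnitalStarSubalgebra ℂ A where
  carrier := {z | e * z = z ∧ z * e = z}
  add_mem' := fun ha hb => ⟨by rw [mul_add, ha.1, hb.1], by rw [add_mul, ha.2, hb.2]⟩
  zero_mem' := ⟨mul_zero e, zero_mul e⟩
  mul_mem' := fun ha hb => ⟨by rw [← mul_assoc, ha.1], by rw [mul_assoc, hb.2]⟩
  smul_mem' := fun c a ha => ⟨by rw [mul_smul_comm, ha.1], by rw [smul_mul_assoc, ha.2]⟩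
  star_mem' := fun {a} ha => by
    constructor
    · rw [← he.star_eq, ← star_mul, ha.2]
    · rw [← he.star_eq, ← star_mul, ha.1]

private lemma mem_cornerAlg_iff {e : A} {he : IsSelfAdjoint e} {z : A} :
    z ∈ cornerAlg e he ↔ e * z = z ∧ z * e = z := Iff.rfl

private lemma cornerAlg_hereditary (e : A) (he : IsSelfAdjoint e) :
    IsHereditarySubalgebra (cornerAlg e he) := by
  constructor
  · have h1 : IsClosed {z : A | e * z = z} :=
      isClosed_eq (continuous_const.mul continuous_id) continuous_id
    have h2 : IsClosed {z : A | z * e = z} :=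
      isClosed_eq (continuous_id.mul continuous_const) continuous_id
    exact h1.inter h2
  · intro a b hb ha hab
    obtain ⟨hb1, hb2⟩ := hb
    set r := CFC.sqrt a with hrdef
    have hrr : r * r = a := CFC.sqrt_mul_sqrt_self a ha
    have hrstar : star r = r := (IsSelfAdjoint.of_nonneg (CFC.sqrt_nonneg _)).star_eq
    set s := CFC.sqrt (b - a) with hsdef
    have hss : s * s = b - a := CFC.sqrt_mul_sqrt_self _ (sub_nonneg.2 hab)
    have hsstar : star s = s := (IsSelfAdjoint.of_nonneg (CFC.sqrt_nonneg _)).star_eq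
    set u := r - r * e with hudef
    set v := s - s * e with hvdef
    have hustar : star u = r - e * r := by rw [hudef, star_sub, star_mul, hrstar, he.star_eq]
    have hvstar : star v = s - e * s := by rw [hvdef, star_sub, star_mul, hsstar, he.star_eq]
    have expand : star u * u + star v * v
        = (r * r + s * s) - (r * r + s * s) * e - e * (r * r + s * s)
          + e * ((r * r + s * s) * e) := by
      rw [hustar, hvstar, hudef, hvdef]
      noncomm_ring
    have hrs2 : r * r + s * s = b := by rw [hrr, hss]; abel
    have hsum : star u * u + star v * v = 0 := by
      rw [expand, hrs2, hb2, hb1]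
      abel
    have hu2 : star u * u = 0 := by
      have h1 : star u * u ≤ 0 := by
        have heq : star u * u = -(star v * v) := by
          linear_combination (norm := abel) hsum
        rw [heq]
        exact neg_nonpos.2 (star_mul_self_nonneg v)
      exact le_antisymm h1 (star_mul_self_nonneg u)
    have hu0 : u = 0 := (CStarRing.star_mul_self_eq_zero_iff u).mp hu2
    have hre : r * e = r := (sub_eq_zero.mp (hudef ▸ hu0)).symm
    have her : e * r = r := by
      have := congrArg star hre
      rwa [star_mul, hrstar, he.star_eq] at this
    constructor
    · rw [← hrr, ← mul_assoc, her, hrr]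
    · rw [← hrr, mul_assoc, hre, hrr]

private lemma exists_pos_decomp (z : A) : ∃ z₁ z₂ z₃ z₄ : A,
    0 ≤ z₁ ∧ 0 ≤ z₂ ∧ 0 ≤ z₃ ∧ 0 ≤ z₄ ∧
    z = z₁ - z₂ + Complex.I • (z₃ - z₄) := by
  refine ⟨((realPart z : A))⁺, ((realPart z : A))⁻,
    ((imaginaryPart z : A))⁺, ((imaginaryPart z : A))⁻,
    CFC.posPart_nonneg _, CFC.negPart_nonneg _, CFC.posPart_nonneg _, CFC.negPart_nonneg _, ?_⟩
  rw [CFC.posPart_sub_negPart _ (realPart z).2, CFC.posPart_sub_negPart _ (imaginaryPart z).2,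
    realPart_add_I_smul_imaginaryPart]

private lemma real_smul_coe (r : ℝ) (x : A) : r • x = (r : ℂ) • x := by
  rw [← smul_one_smul ℂ r x]
  norm_num

/-- The main construction: for a nonzero positive `p` there is a hereditary subalgebra `E`
which is nonzero, all of whose positive elements are dominated by positive multiples of `p`,
and which is contained in any hereditary subalgebra containing `p`. -/
private lemma corner_lemma (p : A) (hp : 0 ≤ p) (hp0 : p ≠ 0) :
    ∃ E : NonUnitalStarSubalgebra ℂ A, IsHereditarySubalgebra E ∧
      (∃ a ∈ E, a ≠ 0) ∧
      (∀ c ∈ E, 0 ≤ c → ∃ μ : ℝ, 0 < μ ∧ c ≤ μ • p) ∧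
      (∀ B : NonUnitalStarSubalgebra ℂ A, IsHereditarySubalgebra B → p ∈ B →
        (E : Set A) ⊆ (B : Set A)) := by
  have hsp : IsSelfAdjoint p := IsSelfAdjoint.of_nonneg hp
  have hnp : 0 < ‖p‖ := norm_pos_iff.mpr hp0
  set ε : ℝ := ‖p‖ / 2 with hε
  have hε0 : 0 < ε := by positivity
  set f : ℝ → ℝ := fun t => min (t / ε) 1 with hf
  have hfc : ContinuousOn f (quasispectrum ℝ p) :=
    ((continuous_id.div_const ε).min continuous_const).continuousOn
  have hf0 : f 0 = 0 := by simp [hf]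
  set h : ℝ → ℝ := fun t => max (t - ε) 0 with hh
  have hhc : ContinuousOn h (quasispectrum ℝ p) :=
    ((continuous_id.sub continuous_const).max continuous_const).continuousOn
  have hh0 : h 0 = 0 := by
    simp only [hh, zero_sub]
    exact max_eq_right (by linarith)
  set e : A := cfcₙ f p with he
  have hesa : IsSelfAdjoint e := cfcₙ_predicate f p
  set a : A := cfcₙ h p with ha
  -- pointwise facts
  have hfh : ∀ t : ℝ, f t * h t = h t := by
    intro t
    rcases le_or_gt t ε with ht | ht
    · have : h t = 0 := max_eq_right (by linarith)
      rw [this, mul_zero]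
    · have : f t = 1 := min_eq_right ((le_div_iff₀ hε0).2 (by linarith))
      rw [this, one_mul]
  have hhf : ∀ t : ℝ, h t * f t = h t := fun t => by rw [mul_comm, hfh]
  -- `a` belongs to the corner algebra
  have hea : e * a = a := by
    rw [he, ha, ← cfcₙ_mul f h p hfc hf0 hhc hh0]
    exact cfcₙ_congr fun t _ => hfh t
  have hae : a * e = a := by
    rw [he, ha, ← cfcₙ_mul h f p hhc hh0 hfc hf0]
    exact cfcₙ_congr fun t _ => hhf t
  -- `a` is nonzero
  have hnorm_mem : ‖p‖ ∈ quasispectrum ℝ p := by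
    obtain ⟨t, ht, hte⟩ := (IsGreatest.norm_cfcₙ (id : ℝ → ℝ) p continuousOn_id rfl hsp).1
    have ht0 : 0 ≤ t := quasispectrum_nonneg_of_nonneg p hp t ht
    have : t = ‖p‖ := by
      rw [cfcₙ_id ℝ p hsp] at hte
      simpa [Real.norm_of_nonneg ht0] using hte
    rwa [this] at ht
  have ha0 : a ≠ 0 := by
    intro hcontra
    have hle := norm_apply_le_norm_cfcₙ h p hnorm_mem hhc hh0 hsp
    rw [← ha, hcontra, norm_zero] at hle
    have : h ‖p‖ = ε := by
      rw [hh]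
      simp only [hε]
      rw [max_eq_left (by linarith)]
      ring
    rw [this, Real.norm_of_nonneg hε0.le] at hle
    linarith
  -- the key estimate `e * e ≤ ε⁻¹ • p`
  have hee_le : e * e ≤ ε⁻¹ • p := by
    have h1 : e * e = cfcₙ (fun t => f t * f t) p := by
      rw [he, cfcₙ_mul f f p hfc hf0 hfc hf0]
    have h2 : cfcₙ (fun t => f t * f t) p ≤ cfcₙ (fun t => ε⁻¹ * t) p := by
      refine cfcₙ_mono (fun t ht => ?_) (hfc.mul hfc)
        ((continuous_const.mul continuous_id).continuousOn) (by rw [hf0, mul_zero]) (by simp)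
      have ht0 : 0 ≤ t := quasispectrum_nonneg_of_nonneg p hp t ht
      have hft0 : 0 ≤ f t := le_min (by positivity) zero_le_one
      calc f t * f t ≤ (t / ε) * 1 :=
        mul_le_mul (min_le_left _ _) (min_le_right _ _) hft0 (by positivity)
      _ = ε⁻¹ * t := by ring
    have h3 : cfcₙ (fun t => ε⁻¹ * t) p = ε⁻¹ • p := cfcₙ_const_mul_id ε⁻¹ p hsp
    rw [h1, ← h3]
    exact h2
  have hee_nonneg : (0 : A) ≤ e * e := by
    have := star_mul_self_nonneg e
    rwa [hesa.star_eq] at this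
  refine ⟨cornerAlg e hesa, cornerAlg_hereditary e hesa, ⟨a, ⟨hea, hae⟩, ha0⟩, ?_, ?_⟩
  · -- positive elements are dominated by multiples of p
    intro c hc hcpos
    obtain ⟨hc1, hc2⟩ := hc
    have hcsa : IsSelfAdjoint c := IsSelfAdjoint.of_nonneg hcpos
    have hc_eq : star e * c * e = c := by rw [hesa.star_eq, hc1, hc2]
    have hb1 : c ≤ ‖c‖ • (e * e) := by
      have := CStarAlgebra.star_left_conjugate_le_norm_smul (a := e) (b := c) hcsa
      rwa [hc_eq, hesa.star_eq] at this
    have hb2 : ‖c‖ • (e * e) ≤ ‖c‖ • (ε⁻¹ • p) := rsmul_mono (norm_nonneg c) hee_le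
    refine ⟨‖c‖ * ε⁻¹ + 1, by positivity, ?_⟩
    calc c ≤ ‖c‖ • (e * e) := hb1
    _ ≤ ‖c‖ • (ε⁻¹ • p) := hb2
    _ = (‖c‖ * ε⁻¹) • p := by rw [smul_smul]
    _ ≤ (‖c‖ * ε⁻¹ + 1) • p := by
        have : ((‖c‖ * ε⁻¹ + 1) • p) - (‖c‖ * ε⁻¹) • p = p := by
          rw [← sub_smul]
          norm_num
        rw [← sub_nonneg, this]
        exact hp
  · -- contained in any hereditary subalgebra containing p
    intro B hB hpB z hz
    obtain ⟨hz1, hz2⟩ := hz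
    have hεpB : ε⁻¹ • p ∈ B := by
      rw [real_smul_coe]
      exact SMulMemClass.smul_mem _ hpB
    have heeB : e * e ∈ B := hB.2 hεpB hee_nonneg hee_le
    have key : ∀ w : A, 0 ≤ w → e * w * e ∈ B := by
      intro w hw
      have hpos : 0 ≤ e * w * e := by
        have := star_left_conjugate_nonneg hw e
        rwa [hesa.star_eq] at this
      have hle : e * w * e ≤ ‖w‖ • (e * e) := by
        have := CStarAlgebra.star_left_conjugate_le_norm_smul (a := e) (b := w)
          (IsSelfAdjoint.of_nonneg hw)
        rwa [hesa.star_eq] at this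
      have hmem : ‖w‖ • (e * e) ∈ B := by
        rw [real_smul_coe]
        exact SMulMemClass.smul_mem _ heeB
      exact hB.2 hmem hpos hle
    obtain ⟨z₁, z₂, z₃, z₄, h1, h2, h3, h4, hdec⟩ := exists_pos_decomp z
    have hze : e * z * e = z := by rw [hz1, hz2]
    have hzdec : z = (e * z₁ * e - e * z₂ * e) + Complex.I • (e * z₃ * e - e * z₄ * e) := by
      conv_lhs => rw [← hze]
      conv_lhs => rw [hdec]
      simp only [mul_sub, sub_mul, mul_add, add_mul, mul_smul_comm, smul_mul_assoc]
    rw [hzdec]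
    exact add_mem (sub_mem (key z₁ h1) (key z₂ h2))
      (SMulMemClass.smul_mem _ (sub_mem (key z₃ h3) (key z₄ h4)))

end Aux

/-- A C*-algebra `A` is semi-finite (every nonzero positive element dominates a nonzero finite
positive element) if and only if every nonzero hereditary C*-subalgebra of `A` contains a
nonzero finite hereditary C*-subalgebra, i.e. a nonzero hereditary C*-subalgebra all of whose
positive elements are finite in `A`. -/
theorem semifinite_iff_hereditary_contains_finite_hereditary
    {A : Type*} [NonUnitalCStarAlgebra A] [PartialOrder A] [StarOrderedRing A] :
    (∀ x : A, 0 ≤ x → x ≠ 0 → ∃ y : A, 0 ≤ y ∧ y ≠ 0 ∧ y ≤ x ∧ CPFinite y) ↔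
    (∀ B : NonUnitalStarSubalgebra ℂ A, IsHereditarySubalgebra B → (∃ x ∈ B, x ≠ 0) →
      ∃ C : NonUnitalStarSubalgebra ℂ A, IsHereditarySubalgebra C ∧ (C : Set A) ⊆ (B : Set A) ∧
        (∃ x ∈ C, x ≠ 0) ∧ ∀ x ∈ C, 0 ≤ x → CPFinite x) := by
  constructor
  · -- semifinite → hereditary statement
    intro hsf B hB ⟨b, hbB, hb0⟩
    have hx0B : star b * b ∈ B := mul_mem (star_mem hbB) hbB
    have hx0pos : (0 : A) ≤ star b * b := star_mul_self_nonneg b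
    have hx00 : star b * b ≠ 0 := (CStarRing.star_mul_self_ne_zero_iff b).mpr hb0
    obtain ⟨y, hy_pos, hy0, hyle, hyfin⟩ := hsf (star b * b) hx0pos hx00
    have hyB : y ∈ B := hB.2 hx0B hy_pos hyle
    obtain ⟨E, hEher, hE0, hEdom, hEsub⟩ := corner_lemma y hy_pos hy0
    refine ⟨E, hEher, hEsub B hB hyB, hE0, ?_⟩
    intro c hcE hcpos
    obtain ⟨μ, hμ, hcμ⟩ := hEdom c hcE hcpos
    exact (hyfin.rsmul hμ).of_le hcpos hcμ
  · -- hereditary statement → semifinite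
    intro hher x hx hx0
    obtain ⟨E, hEher, hE0, hEdom, _⟩ := corner_lemma x hx hx0
    obtain ⟨C, hCher, hCsub, ⟨w, hwC, hw0⟩, hCfin⟩ := hher E hEher hE0
    have hcC : star w * w ∈ C := mul_mem (star_mem hwC) hwC
    have hcpos : (0 : A) ≤ star w * w := star_mul_self_nonneg w
    have hc0 : star w * w ≠ 0 := (CStarRing.star_mul_self_ne_zero_iff w).mpr hw0
    have hcfin : CPFinite (star w * w) := hCfin _ hcC hcpos
    obtain ⟨μ, hμ, hcμ⟩ := hEdom (star w * w) (hCsub hcC) hcpos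
    refine ⟨μ⁻¹ • (star w * w), rsmul_nonneg (by positivity) hcpos, ?_, ?_, ?_⟩
    · intro hzero
      have := congrArg (fun v : A => μ • v) hzero
      simp only [smul_smul, mul_inv_cancel₀ hμ.ne', one_smul, smul_zero] at this
      exact hc0 this
    · have := rsmul_mono (r := μ⁻¹) (by positivity) hcμ
      rwa [smul_smul, inv_mul_cancel₀ hμ.ne', one_smul] at this
    · exact hcfin.rsmul (by positivity)
end
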